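/- Under the smoothed-indicator test setup, suppose μ_j ≥ 0 for all j ∈ {1,…,p} and the set M := {j : μ_j = 0} is nonempty. Then Q₂ converges in probability to Ψ(0)·√(d_Mᵀ·Δ·V·Δ·d_M), where d_M ∈ ℝᵖ has j-th entry 1 if j ∈ M and 0 otherwise. (Intermediate claim in the proof of Theorem 1, part 1.) -/

import Mathlib

open MeasureTheory Filter Topology ProbabilityTheory Matrix

noncomputable section

/-- Convergence in probability to a constant `c`: for every `ε > 0`,
`P(|X_T − c| > ε) → 0` as `T → ∞`. -/
def TendstoInProb {Ω : Type*} [MeasurableSpace Ω] (P : Measure Ω)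
    (X : ℕ → Ω → ℝ) (c : ℝ) : Prop :=
  ∀ ε : ℝ, 0 < ε →
    Tendsto (fun T => P {ω | ε < |X T ω - c|}) atTop (nhds 0)

/-- Convergence in distribution: weak convergence of the laws of `X_T` under `P`
to the measure `ν` (tested against bounded continuous functions). -/
def TendstoInDistrib {Ω : Type*} [MeasurableSpace Ω] (P : Measure Ω)
    {E : Type*} [MeasurableSpace E] [TopologicalSpace E]
    (X : ℕ → Ω → E) (ν : Measure E) : Prop :=
  ∀ f : BoundedContinuousFunction E ℝ,
    Tendsto (fun T => ∫ ω, f (X T ω) ∂P) atTop (nhds (∫ x, f x ∂ν))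

/-- The standard normal density `φ(x) = exp(−x²/2)/√(2π)`. -/
def normalPDF (x : ℝ) : ℝ := Real.exp (-(x ^ 2) / 2) / Real.sqrt (2 * Real.pi)

/-- The standard normal CDF `Φ`. -/
def stdNormalCDF (x : ℝ) : ℝ := ∫ t in Set.Iic x, normalPDF t

/-- The adjustment term
`Λ_T(m, v) = v·ψ̃(K(T)·m)·K(T)/√T − √v·Σᵢ (Ψ(aᵢ⁻) − Ψ(aᵢ⁺))·φ(aᵢ·√T/(√v·K(T)))`,
where `ψt` is the left-limit of the derivative of `Ψ` and `ΨL i`, `ΨR i` are the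
one-sided limits of `Ψ` at the discontinuity points `a i`. -/
def Lambda (K : ℕ → ℝ) (ψt : ℝ → ℝ) {n : ℕ} (a ΨL ΨR : Fin n → ℝ)
    (T : ℕ) (m v : ℝ) : ℝ :=
  v * ψt (K T * m) * K T / Real.sqrt T -
    Real.sqrt v * ∑ i, (ΨL i - ΨR i) * normalPDF (a i * Real.sqrt T / (Real.sqrt v * K T))

/-- The positive semidefinite square root of a positive semidefinite matrix, as defined in
the older Mathlib (`Matrix.PosSemidef.sqrt`, since removed): `U·diag(√λ)·U*`. -/
def Matrix.PosSemidef.sqrt {n : Type*} [Fintype n] [DecidableEq n]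
    {A : Matrix n n ℝ} (hA : A.PosSemidef) : Matrix n n ℝ :=
  hA.1.eigenvectorUnitary.1 * diagonal (fun i => Real.sqrt (hA.1.eigenvalues i)) *
    (star hA.1.eigenvectorUnitary : Matrix n n ℝ)

/-- The Gaussian measure `N(c, V)` on `ℝᵖ`: the pushforward of the product of `p`
standard Gaussian measures under `z ↦ c + V^{1/2}·z`, where `V^{1/2}` is the positive
semidefinite square root of `V`. -/
def gaussianPi {p : ℕ} (c : Fin p → ℝ) {V : Matrix (Fin p) (Fin p) ℝ}
    (hV : V.PosSemidef) : Measure (Fin p → ℝ) :=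
  Measure.map (fun z => c + hV.sqrt.mulVec z)
    (Measure.pi fun _ : Fin p => gaussianReal 0 1)

/-- `Ψ̂_{T,j} = Ψ(K(T)·θ̂_{T,j}·μ̂_{T,j})`. -/
def Psihat {p : ℕ} {Ω : Type*} (Ψ : ℝ → ℝ) (K : ℕ → ℝ)
    (muhat thetahat : ℕ → Ω → Fin p → ℝ) (T : ℕ) (ω : Ω) (j : Fin p) : ℝ :=
  Ψ (K T * thetahat T ω j * muhat T ω j)

/-- The statistic `Q₁ = √T·Σⱼ Ψ̂_{T,j}·θ̂_{T,j}·μ̂_{T,j} − Σⱼ Λ_T(θ̂_{T,j}·μ̂_{T,j}, θ̂_{T,j}²·v̂_{T,jj})`. -/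
def Q1stat {p : ℕ} {Ω : Type*} (Ψ ψt : ℝ → ℝ) {n : ℕ} (a ΨL ΨR : Fin n → ℝ)
    (K : ℕ → ℝ) (muhat : ℕ → Ω → Fin p → ℝ)
    (Vhat : ℕ → Ω → Matrix (Fin p) (Fin p) ℝ)
    (thetahat : ℕ → Ω → Fin p → ℝ) (T : ℕ) (ω : Ω) : ℝ :=
  Real.sqrt T * ∑ j, Psihat Ψ K muhat thetahat T ω j * thetahat T ω j * muhat T ω j
    - ∑ j, Lambda K ψt a ΨL ΨR T (thetahat T ω j * muhat T ω j)
        ((thetahat T ω j) ^ 2 * Vhat T ω j j)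

/-- The statistic `Q₂ = √(Σᵢ Σⱼ Ψ̂_{T,i}·θ̂_{T,i}·v̂_{T,ij}·θ̂_{T,j}·Ψ̂_{T,j})`. -/
def Q2stat {p : ℕ} {Ω : Type*} (Ψ : ℝ → ℝ) (K : ℕ → ℝ)
    (muhat : ℕ → Ω → Fin p → ℝ)
    (Vhat : ℕ → Ω → Matrix (Fin p) (Fin p) ℝ)
    (thetahat : ℕ → Ω → Fin p → ℝ) (T : ℕ) (ω : Ω) : ℝ :=
  Real.sqrt (∑ i, ∑ j, Psihat Ψ K muhat thetahat T ω i * thetahat T ω i *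
    Vhat T ω i j * thetahat T ω j * Psihat Ψ K muhat thetahat T ω j)

/-- The test statistic `Q = Φ(Q₁/Q₂)` if `Q₂ > 0`, and `Q = 1` if `Q₂ = 0`. -/
def Qstat {p : ℕ} {Ω : Type*} (Ψ ψt : ℝ → ℝ) {n : ℕ} (a ΨL ΨR : Fin n → ℝ)
    (K : ℕ → ℝ) (muhat : ℕ → Ω → Fin p → ℝ)
    (Vhat : ℕ → Ω → Matrix (Fin p) (Fin p) ℝ)
    (thetahat : ℕ → Ω → Fin p → ℝ) (T : ℕ) (ω : Ω) : ℝ :=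
  if 0 < Q2stat Ψ K muhat Vhat thetahat T ω then
    stdNormalCDF (Q1stat Ψ ψt a ΨL ΨR K muhat Vhat thetahat T ω /
      Q2stat Ψ K muhat Vhat thetahat T ω)
  else 1

/-! ### Auxiliary lemmas -/

lemma aux_exists_ofReal_le {ε₀ : ENNReal} (hε₀ : 0 < ε₀) :
    ∃ δ : ℝ, 0 < δ ∧ ENNReal.ofReal δ ≤ ε₀ := by
  refine ⟨(min 1 ε₀).toReal, ?_, ?_⟩
  · apply ENNReal.toReal_pos
    · exact (lt_min one_pos hε₀).ne'
    · exact ((min_le_left _ _).trans_lt ENNReal.one_lt_top).ne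
  · rw [ENNReal.ofReal_toReal ((min_le_left _ _).trans_lt ENNReal.one_lt_top).ne]
    exact min_le_right _ _

def auxHmap (x : ℝ) : ℝ := x / (1 + |x|)
def auxGinv (y : ℝ) : ℝ := y / (1 - |y|)

lemma aux_abs_hmap_le (x : ℝ) : |auxHmap x| ≤ 1 := by
  unfold auxHmap
  rw [abs_div, abs_of_pos (by positivity : (0:ℝ) < 1 + |x|)]
  rw [div_le_one (by positivity)]
  linarith [abs_nonneg x]

lemma aux_ginv_hmap (x : ℝ) : auxGinv (auxHmap x) = x := by
  unfold auxGinv auxHmap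
  have h1 : (0:ℝ) < 1 + |x| := by positivity
  have habs : |x / (1 + |x|)| = |x| / (1 + |x|) := by
    rw [abs_div, abs_of_pos h1]
  rw [habs]
  have h2 : 1 - |x| / (1 + |x|) = 1 / (1 + |x|) := by field_simp; ring
  rw [h2]
  field_simp

lemma aux_continuous_hmap : Continuous auxHmap := by
  apply Continuous.div continuous_id (by continuity)
  intro x; positivity

lemma aux_measurable_ginv : Measurable auxGinv := by
  exact measurable_id.div (measurable_const.sub measurable_id.abs)

def auxGcut (C x : ℝ) : ℝ := min 1 (max 0 (|x| - C))

lemma aux_gcut_nonneg (C x : ℝ) : 0 ≤ auxGcut C x :=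
  le_min zero_le_one (le_max_left _ _)

lemma aux_gcut_le_one (C x : ℝ) : auxGcut C x ≤ 1 := min_le_left _ _

lemma aux_gcut_eq_one {C x : ℝ} (h : C + 1 ≤ |x|) : 1 ≤ auxGcut C x :=
  le_min le_rfl (le_max_of_le_right (by linarith))

lemma aux_continuous_gcut (C : ℝ) : Continuous (auxGcut C) := by
  unfold auxGcut
  exact continuous_const.min (continuous_const.max (continuous_abs.sub continuous_const))

lemma aux_gcut_zero {C x : ℝ} (h : |x| ≤ C) : auxGcut C x = 0 := by
  unfold auxGcut
  rw [max_eq_left (by linarith), min_eq_right zero_le_one]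

lemma aux_markov01 {Ω : Type*} [MeasurableSpace Ω] (P : Measure Ω) [IsProbabilityMeasure P]
    (F : Ω → ℝ) (hm : AEMeasurable F P) (h0 : ∀ ω, 0 ≤ F ω) (h1 : ∀ ω, F ω ≤ 1) :
    P {ω | 1 ≤ F ω} ≤ ENNReal.ofReal (∫ ω, F ω ∂P) := by
  set G := hm.mk F with hGdef
  have hGF : F =ᵐ[P] G := hm.ae_eq_mk
  have hGmeas : Measurable G := hm.measurable_mk
  have hset : {ω | 1 ≤ F ω} =ᵐ[P] {ω | 1 ≤ G ω} := by
    filter_upwards [hGF] with ω h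
    show (1 ≤ F ω) = (1 ≤ G ω)
    rw [h]
  rw [measure_congr hset]
  have hGint : Integrable G P := by
    refine (integrable_const (1:ℝ)).mono' hGmeas.aestronglyMeasurable ?_
    filter_upwards [hGF] with ω h
    rw [← h, Real.norm_eq_abs, abs_le]
    exact ⟨by linarith [h0 ω], h1 ω⟩
  have hms : MeasurableSet {ω | 1 ≤ G ω} := measurableSet_le measurable_const hGmeas
  have key : P {ω | 1 ≤ G ω} ≤ ∫⁻ ω, ENNReal.ofReal (G ω) ∂P := by
    rw [← lintegral_indicator_one hms]
    apply lintegral_mono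
    intro ω
    by_cases hω : ω ∈ {ω | 1 ≤ G ω}
    · rw [Set.indicator_of_mem hω]
      simpa using ENNReal.one_le_ofReal.2 hω
    · rw [Set.indicator_of_notMem hω]
      exact zero_le
  rw [← ofReal_integral_eq_lintegral_ofReal hGint
    (by filter_upwards [hGF] with ω h; rw [← h]; exact h0 ω)] at key
  rwa [integral_congr_ae hGF]

lemma aux_tendsto_measure_zero_mono {Ω : Type*} [MeasurableSpace Ω] (P : Measure Ω)
    (s u : ℕ → Set Ω) (hsub : ∀ᶠ T in atTop, s T ⊆ u T)
    (hu : Tendsto (fun T => P (u T)) atTop (nhds 0)) :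
    Tendsto (fun T => P (s T)) atTop (nhds 0) := by
  apply tendsto_of_tendsto_of_tendsto_of_le_of_le' tendsto_const_nhds hu
  · exact Eventually.of_forall fun T => zero_le
  · exact hsub.mono fun T h => measure_mono h

lemma aux_tendsto_measure_zero_union {Ω : Type*} [MeasurableSpace Ω] (P : Measure Ω)
    (s u v : ℕ → Set Ω) (hsub : ∀ᶠ T in atTop, s T ⊆ u T ∪ v T)
    (hu : Tendsto (fun T => P (u T)) atTop (nhds 0))
    (hv : Tendsto (fun T => P (v T)) atTop (nhds 0)) :
    Tendsto (fun T => P (s T)) atTop (nhds 0) := by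
  apply tendsto_of_tendsto_of_tendsto_of_le_of_le' tendsto_const_nhds
    (by simpa using hu.add hv)
  · exact Eventually.of_forall fun T => zero_le
  · exact hsub.mono fun T h =>
      (measure_mono h).trans (measure_union_le _ _)

lemma aux_tendstoInProb_comp {Ω ι : Type*} [MeasurableSpace Ω] [Fintype ι] (P : Measure Ω)
    (X : ι → ℕ → Ω → ℝ) (c : ι → ℝ) (h : ∀ i, TendstoInProb P (X i) (c i))
    (g : (ι → ℝ) → ℝ) (hg : ContinuousAt g c) :
    TendstoInProb P (fun T ω => g (fun i => X i T ω)) (g c) := by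
  intro ε hε
  obtain ⟨δ, hδ0, hδ⟩ := Metric.continuousAt_iff.mp hg ε hε
  have hsub : ∀ T, {ω | ε < |g (fun i => X i T ω) - g c|} ⊆
      ⋃ i, {ω | δ/2 < |X i T ω - c i|} := by
    intro T ω hω
    simp only [Set.mem_setOf_eq] at hω
    simp only [Set.mem_iUnion, Set.mem_setOf_eq]
    by_contra hall
    push_neg at hall
    have hd : dist (fun i => X i T ω) c < δ := by
      rcases isEmpty_or_nonempty ι with hι | hι
      · simpa [dist_pi_def] using hδ0
      · exact (dist_pi_lt_iff hδ0).2 fun i => by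
          rw [Real.dist_eq]; linarith [hall i]
    have := hδ hd
    rw [Real.dist_eq] at this
    exact absurd hω (not_lt.2 this.le)
  apply tendsto_of_tendsto_of_tendsto_of_le_of_le (g := fun _ => (0:ENNReal))
    (h := fun T => ∑ i, P {ω | δ/2 < |X i T ω - c i|}) tendsto_const_nhds
  · have : Tendsto (fun T => ∑ i, P {ω | δ/2 < |X i T ω - c i|}) atTop
        (nhds (∑ _i : ι, (0:ENNReal))) :=
      tendsto_finset_sum _ fun i _ => h i (δ/2) (by positivity)
    simpa using this
  · exact fun T => zero_le
  · intro T
    refine (measure_mono (hsub T)).trans ?_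
    exact (measure_iUnion_le _).trans (by rw [tsum_fintype])

lemma aux_tendstoInProb_comp1 {Ω : Type*} [MeasurableSpace Ω] (P : Measure Ω)
    (X : ℕ → Ω → ℝ) (c : ℝ) (h : TendstoInProb P X c)
    (g : ℝ → ℝ) (hg : ContinuousAt g c) :
    TendstoInProb P (fun T ω => g (X T ω)) (g c) := by
  intro ε hε
  obtain ⟨δ, hδ0, hδ⟩ := Metric.continuousAt_iff.mp hg ε hε
  apply aux_tendsto_measure_zero_mono P _ _ ?_ (h (δ/2) (by positivity))
  apply Eventually.of_forall
  intro T ω hω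
  simp only [Set.mem_setOf_eq] at hω ⊢
  by_contra hc
  push_neg at hc
  have := hδ (show dist (X T ω) c < δ by rw [Real.dist_eq]; linarith)
  rw [Real.dist_eq] at this
  exact absurd hω (not_lt.2 this.le)

lemma aux_tendstoInProb_mul {Ω : Type*} [MeasurableSpace Ω] (P : Measure Ω)
    (A B : ℕ → Ω → ℝ) (ca cb : ℝ) (hA : TendstoInProb P A ca) (hB : TendstoInProb P B cb) :
    TendstoInProb P (fun T ω => A T ω * B T ω) (ca * cb) := by
  have := aux_tendstoInProb_comp P
    (fun i : Fin 2 => if i = 0 then A else B)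
    (fun i : Fin 2 => if i = 0 then ca else cb)
    (fun i => by fin_cases i <;> simpa)
    (fun y => y 0 * y 1)
    (((continuous_apply (0 : Fin 2)).mul (continuous_apply 1)).continuousAt)
  simpa using this

lemma aux_tendsto_sqrt_atTop : Tendsto Real.sqrt atTop atTop := by
  rw [tendsto_atTop_atTop]
  intro b
  refine ⟨b^2, fun a ha => ?_⟩
  calc b ≤ |b| := le_abs_self b
  _ = Real.sqrt (b^2) := (Real.sqrt_sq_eq_abs b).symm
  _ ≤ Real.sqrt a := Real.sqrt_le_sqrt ha

lemma aux_tendsto_sqrtT_div_K (K : ℕ → ℝ) (hKpos : ∀ T, 0 < K T)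
    (hKo : Tendsto (fun T : ℕ => K T / Real.sqrt T) atTop (nhds 0)) :
    Tendsto (fun T : ℕ => Real.sqrt T / K T) atTop atTop := by
  have hpos : ∀ᶠ T : ℕ in atTop, K T / Real.sqrt T ∈ Set.Ioi (0:ℝ) := by
    filter_upwards [eventually_ge_atTop 1] with T hT
    have : (0:ℝ) < Real.sqrt T := Real.sqrt_pos.2 (by exact_mod_cast hT)
    exact div_pos (hKpos T) this
  have h1 : Tendsto (fun T : ℕ => K T / Real.sqrt T) atTop (nhdsWithin 0 (Set.Ioi 0)) :=
    tendsto_nhdsWithin_of_tendsto_nhds_of_eventually_within _ hKo hpos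
  have h2 := h1.inv_tendsto_nhdsGT_zero
  refine h2.congr fun T => ?_
  show (K T / Real.sqrt T)⁻¹ = _
  rw [inv_div]

lemma aux_tight {Ω : Type*} [MeasurableSpace Ω] (P : Measure Ω) [IsProbabilityMeasure P]
    {p : ℕ} (muhat : ℕ → Ω → Fin p → ℝ) (μ : Fin p → ℝ)
    {V : Matrix (Fin p) (Fin p) ℝ} (hV : V.PosSemidef)
    (hD1 : TendstoInDistrib P
      (fun T ω j => Real.sqrt T * (muhat T ω j - μ j)) (gaussianPi 0 hV))
    (j : Fin p) (c : ℕ → ℝ) (hc : Tendsto c atTop atTop) :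
    Tendsto (fun T => P {ω | c T ≤ |Real.sqrt T * (muhat T ω j - μ j)|})
      atTop (nhds 0) := by
  set ν := gaussianPi (0 : Fin p → ℝ) hV with hνdef
  have hmeas : Measurable (fun z : Fin p → ℝ => (0 : Fin p → ℝ) + hV.sqrt.mulVec z) := by
    apply Measurable.add measurable_const
    apply measurable_pi_lambda
    intro i
    simp only [Matrix.mulVec, dotProduct]
    exact Finset.measurable_sum _ fun k _ => (measurable_pi_apply k).const_mul _
  haveI hνprob : IsProbabilityMeasure ν := by
    rw [hνdef]
    unfold gaussianPi
    exact Measure.isProbabilityMeasure_map hmeas.aemeasurable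
  rw [ENNReal.tendsto_nhds_zero]
  intro ε₀ hε₀
  obtain ⟨δ, hδ0, hδε⟩ := aux_exists_ofReal_le hε₀
  -- choose C by dominated convergence
  have hDCT : Tendsto (fun C : ℕ => ∫ z, auxGcut C (z j) ∂ν) atTop (nhds 0) := by
    have := tendsto_integral_of_dominated_convergence (μ := ν)
      (F := fun C : ℕ => fun z : Fin p → ℝ => auxGcut C (z j)) (f := fun _ => (0:ℝ))
      (fun _ => (1:ℝ))
      (fun C => ((aux_continuous_gcut C).comp (continuous_apply j)).aestronglyMeasurable)
      (integrable_const 1)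
      (fun C => Eventually.of_forall fun z => by
        rw [Real.norm_eq_abs, abs_of_nonneg (aux_gcut_nonneg _ _)]
        exact aux_gcut_le_one _ _)
      (Eventually.of_forall fun z => by
        apply tendsto_const_nhds.congr'
        filter_upwards [eventually_ge_atTop ⌈|z j|⌉₊] with C hC
        exact (aux_gcut_zero ((Nat.le_ceil _).trans (by exact_mod_cast hC))).symm)
    simpa using this
  obtain ⟨C, hC⟩ := (hDCT.eventually_lt_const (show (0:ℝ) < δ/2 by positivity)).exists
  -- the BCF for measurability
  have hf1bd : ∀ z : Fin p → ℝ, ‖auxHmap (z j) + 2‖ ≤ 3 := by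
    intro z
    rw [Real.norm_eq_abs]
    have := abs_le.1 (aux_abs_hmap_le (z j))
    rw [abs_le]
    constructor <;> linarith [this.1, this.2]
  set f1 : BoundedContinuousFunction (Fin p → ℝ) ℝ :=
    BoundedContinuousFunction.ofNormedAddCommGroup (fun z => auxHmap (z j) + 2)
      (by exact (aux_continuous_hmap.comp (continuous_apply j)).add continuous_const)
      3 hf1bd with hf1def
  have hf1app : ∀ z, f1 z = auxHmap (z j) + 2 := fun z => rfl
  have hL1 : (1:ℝ) ≤ ∫ z, f1 z ∂ν := by
    calc (1:ℝ) = ∫ _z, (1:ℝ) ∂ν := by simp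
    _ ≤ ∫ z, f1 z ∂ν := by
        apply integral_mono (integrable_const 1) (f1.integrable ν)
        intro z
        show (1:ℝ) ≤ f1 z
        rw [hf1app]
        have := abs_le.1 (aux_abs_hmap_le (z j))
        linarith [this.1]
  have hev1 : ∀ᶠ T : ℕ in atTop,
      Integrable (fun ω => f1 (fun j' => Real.sqrt T * (muhat T ω j' - μ j'))) P := by
    have hpos := (hD1 f1).eventually (eventually_gt_nhds
      (lt_of_lt_of_le one_pos hL1))
    filter_upwards [hpos] with T hT
    by_contra hni
    rw [integral_undef hni] at hT
    exact lt_irrefl _ hT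
  have hevY : ∀ᶠ T : ℕ in atTop,
      AEMeasurable (fun ω => Real.sqrt T * (muhat T ω j - μ j)) P := by
    filter_upwards [hev1] with T hT
    have h1 : AEMeasurable
        (fun ω => f1 (fun j' => Real.sqrt T * (muhat T ω j' - μ j'))) P :=
      hT.aemeasurable
    have heq : (fun ω => Real.sqrt T * (muhat T ω j - μ j)) =
        fun ω => auxGinv (f1 (fun j' => Real.sqrt T * (muhat T ω j' - μ j')) - 2) := by
      funext ω
      rw [hf1app]
      simp only [add_sub_cancel_right]
      rw [aux_ginv_hmap]
    rw [heq]
    exact aux_measurable_ginv.comp_aemeasurable (h1.sub aemeasurable_const)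
  -- the BCF for the tail bound
  set fC : BoundedContinuousFunction (Fin p → ℝ) ℝ :=
    BoundedContinuousFunction.ofNormedAddCommGroup (fun z => auxGcut C (z j))
      ((aux_continuous_gcut C).comp (continuous_apply j)) 1
      (fun z => by rw [Real.norm_eq_abs, abs_of_nonneg (aux_gcut_nonneg _ _)]
                   exact aux_gcut_le_one _ _) with hfCdef
  have hfCapp : ∀ z, fC z = auxGcut C (z j) := fun z => rfl
  have hCint : ∀ᶠ T : ℕ in atTop,
      (∫ ω, fC (fun j' => Real.sqrt T * (muhat T ω j' - μ j')) ∂P) < δ := by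
    apply (hD1 fC).eventually_lt_const
    calc (∫ z, fC z ∂ν) = ∫ z, auxGcut C (z j) ∂ν := by simp only [hfCapp]
    _ < δ/2 := hC
    _ < δ := by linarith
  filter_upwards [hevY, hCint, hc.eventually_ge_atTop ((C:ℝ)+1)] with T hY hint hcT
  have hsub : {ω | c T ≤ |Real.sqrt T * (muhat T ω j - μ j)|} ⊆
      {ω | 1 ≤ auxGcut C (Real.sqrt T * (muhat T ω j - μ j))} := by
    intro ω hω
    simp only [Set.mem_setOf_eq] at hω ⊢
    exact aux_gcut_eq_one (le_trans hcT hω)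
  calc P {ω | c T ≤ |Real.sqrt T * (muhat T ω j - μ j)|}
      ≤ P {ω | 1 ≤ auxGcut C (Real.sqrt T * (muhat T ω j - μ j))} := measure_mono hsub
  _ ≤ ENNReal.ofReal (∫ ω, auxGcut C (Real.sqrt T * (muhat T ω j - μ j)) ∂P) :=
      aux_markov01 P _ ((aux_continuous_gcut C).measurable.comp_aemeasurable hY)
        (fun ω => aux_gcut_nonneg _ _) (fun ω => aux_gcut_le_one _ _)
  _ ≤ ENNReal.ofReal δ := by
      apply ENNReal.ofReal_le_ofReal
      have : (fun ω => auxGcut C (Real.sqrt T * (muhat T ω j - μ j))) =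
          fun ω => fC (fun j' => Real.sqrt T * (muhat T ω j' - μ j')) := by
        funext ω; rw [hfCapp]
      rw [this]
      exact hint.le
  _ ≤ ε₀ := hδε

/-- Intermediate claim in the proof of Theorem 1, part 1: under the null with at least
one binding constraint, `Q₂ → Ψ(0)·√(d_Mᵀ·Δ·V·Δ·d_M)` in probability. -/
theorem Q2_tendsto_under_null_boundary
    {Ω : Type*} [MeasurableSpace Ω] (P : Measure Ω) [IsProbabilityMeasure P]
    {p : ℕ} (hp : 0 < p)
    -- the smoothed indicator
    (Ψ ψ ψt : ℝ → ℝ) {n : ℕ} (a ΨL ΨR : Fin n → ℝ) (bΨ : ℝ)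
    (hΨanti : Antitone Ψ) (hΨ01 : ∀ x : ℝ, 0 ≤ Ψ x ∧ Ψ x ≤ 1) (hΨ0 : 0 < Ψ 0)
    (ha : StrictMono a) (hane : ∀ i, a i ≠ 0)
    (hderiv : ∀ x ∉ Set.range a, HasDerivAt Ψ (ψ x) x)
    (hψcont : ContinuousOn ψ (Set.range a)ᶜ)
    (hψbd : ∀ x ∉ Set.range a, |ψ x| ≤ bΨ)
    (hψt : ∀ x : ℝ, Tendsto ψ (nhdsWithin x (Set.Iio x)) (nhds (ψt x)))
    (hΨL : ∀ i, Tendsto Ψ (nhdsWithin (a i) (Set.Iio (a i))) (nhds (ΨL i)))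
    (hΨR : ∀ i, Tendsto Ψ (nhdsWithin (a i) (Set.Ioi (a i))) (nhds (ΨR i)))
    -- the tuning sequence
    (K : ℕ → ℝ) (hKpos : ∀ T, 0 < K T) (hKmono : StrictMono K)
    (hKtop : Tendsto K atTop atTop)
    (hKo : Tendsto (fun T : ℕ => K T / Real.sqrt T) atTop (nhds 0))
    (hA6 : ∀ x : ℝ, 0 < x →
      Tendsto (fun T : ℕ => Real.sqrt T * Ψ (K T * x)) atTop (nhds 0))
    -- the data
    (muhat thetahat : ℕ → Ω → Fin p → ℝ)
    (Vhat : ℕ → Ω → Matrix (Fin p) (Fin p) ℝ)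
    (hVhatPSD : ∀ T, ∀ᵐ ω ∂P, (Vhat T ω).PosSemidef)
    (hthetahatpos : ∀ T, ∀ᵐ ω ∂P, ∀ j, 0 < thetahat T ω j)
    -- the parameters
    (μ : Fin p → ℝ) (V : Matrix (Fin p) (Fin p) ℝ) (hV : V.PosSemidef)
    (θ : Fin p → ℝ) (hθpos : ∀ j, 0 < θ j)
    -- [D1] : √T·(μ̂_T − μ) converges in distribution to N(0, V)
    (hD1 : TendstoInDistrib P
      (fun T ω j => Real.sqrt T * (muhat T ω j - μ j)) (gaussianPi 0 hV))
    -- [D2] : V·Δ·d(μ) ≠ 0 whenever d(μ) ≠ 0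
    (hD2 : (fun j => if μ j < 0 then (1 : ℝ) else if μ j = 0 then Ψ 0 else 0) ≠ 0 →
      V.mulVec (fun j =>
        θ j * (if μ j < 0 then (1 : ℝ) else if μ j = 0 then Ψ 0 else 0)) ≠ 0)
    -- [D3] : V̂_T → V in probability entrywise
    (hD3 : ∀ i j, TendstoInProb P (fun T ω => Vhat T ω i j) (V i j))
    -- [D4] : θ̂_T → θ in probability
    (hD4 : ∀ j, TendstoInProb P (fun T ω => thetahat T ω j) (θ j))
    -- the null hypothesis holds and `M = {j : μ_j = 0}` is nonempty
    (hnull : ∀ j, 0 ≤ μ j) (hM : ∃ j, μ j = 0) :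
    TendstoInProb P (Q2stat Ψ K muhat Vhat thetahat)
      (Ψ 0 * Real.sqrt (∑ i, ∑ j,
        (if μ i = 0 then (1 : ℝ) else 0) * θ i * V i j * θ j *
          (if μ j = 0 then (1 : ℝ) else 0))) := by
  classical
  have hμin : ∀ j, TendstoInProb P (fun T ω => muhat T ω j) (μ j) := by
    intro j η hη
    have hc : Tendsto (fun T : ℕ => η * Real.sqrt T) atTop atTop :=
      (aux_tendsto_sqrt_atTop.comp tendsto_natCast_atTop_atTop).const_mul_atTop hη
    apply aux_tendsto_measure_zero_mono P _ _ ?_ (aux_tight P muhat μ hV hD1 j _ hc)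
    apply Eventually.of_forall
    intro T ω hω
    simp only [Set.mem_setOf_eq] at hω ⊢
    have h1 : |Real.sqrt T * (muhat T ω j - μ j)| =
        Real.sqrt T * |muhat T ω j - μ j| := by
      rw [abs_mul, abs_of_nonneg (Real.sqrt_nonneg _)]
    rw [h1]
    calc η * Real.sqrt T = Real.sqrt T * η := mul_comm _ _
    _ ≤ Real.sqrt T * |muhat T ω j - μ j| :=
      mul_le_mul_of_nonneg_left hω.le (Real.sqrt_nonneg _)
  have hθμ : ∀ j, TendstoInProb P (fun T ω => thetahat T ω j * muhat T ω j)
      (θ j * μ j) := fun j => aux_tendstoInProb_mul P _ _ _ _ (hD4 j) (hμin j)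
  have hΨcont0 : ContinuousAt Ψ 0 := by
    refine (hderiv 0 ?_).continuousAt
    rintro ⟨i, hi⟩
    exact hane i hi
  have hPsi : ∀ j, TendstoInProb P (fun T ω => Psihat Ψ K muhat thetahat T ω j)
      (if μ j = 0 then Ψ 0 else 0) := by
    intro j
    rcases eq_or_lt_of_le (hnull j) with h0 | hpos
    · rw [if_pos h0.symm]
      have hK0 : TendstoInProb P
          (fun T ω => K T * thetahat T ω j * muhat T ω j) 0 := by
        intro η hη
        set B := θ j + 1 with hBdef
        have hB : 0 < B := by have := hθpos j; simp only [hBdef]; linarith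
        have hcc : Tendsto (fun T : ℕ => η * Real.sqrt T / (K T * B)) atTop atTop := by
          have h1 := (aux_tendsto_sqrtT_div_K K hKpos hKo).const_mul_atTop
            (show 0 < η / B by positivity)
          refine h1.congr fun T => ?_
          field_simp
        apply aux_tendsto_measure_zero_union P _ _ _ ?_
          (hD4 j (1/2) (by norm_num)) (aux_tight P muhat μ hV hD1 j _ hcc)
        filter_upwards [eventually_ge_atTop 1] with T hT
        intro ω hω
        simp only [Set.mem_setOf_eq, Set.mem_union] at hω ⊢
        by_contra hnot
        push_neg at hnot
        obtain ⟨h1, h2⟩ := hnot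
        have hk := hKpos T
        have hs : (0:ℝ) < Real.sqrt T := Real.sqrt_pos.2 (by exact_mod_cast hT)
        have hθb : |thetahat T ω j| ≤ B := by
          have h3 := abs_sub_abs_le_abs_sub (thetahat T ω j) (θ j)
          have h4 : |θ j| = θ j := abs_of_pos (hθpos j)
          simp only [hBdef]
          linarith
        have hωv : η < K T * |thetahat T ω j| * |muhat T ω j| := by
          have h5 : |K T * thetahat T ω j * muhat T ω j - 0| =
              K T * |thetahat T ω j| * |muhat T ω j| := by
            rw [sub_zero, abs_mul, abs_mul, abs_of_pos hk]
          rwa [h5] at hω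
        rw [← h0] at h2
        have h6 : |Real.sqrt T * (muhat T ω j - 0)| =
            Real.sqrt T * |muhat T ω j| := by
          rw [sub_zero, abs_mul, abs_of_nonneg (Real.sqrt_nonneg _)]
        rw [h6] at h2
        rw [lt_div_iff₀ (by positivity)] at h2
        have hm : η < K T * B * |muhat T ω j| := by
          have h7 : K T * |thetahat T ω j| * |muhat T ω j| ≤
              K T * B * |muhat T ω j| :=
            mul_le_mul_of_nonneg_right
              (mul_le_mul_of_nonneg_left hθb hk.le) (abs_nonneg _)
          linarith
        nlinarith [mul_lt_mul_of_pos_right hm hs]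
      exact aux_tendstoInProb_comp1 P _ 0 hK0 Ψ hΨcont0
    · rw [if_neg (ne_of_gt hpos)]
      intro η hη
      set c0 := θ j * μ j / 2 with hc0def
      have hc0 : 0 < c0 := div_pos (mul_pos (hθpos j) hpos) two_pos
      have hsmall : ∀ᶠ T : ℕ in atTop, Ψ (K T * c0) < η := by
        have h6 := (hA6 c0 hc0).eventually_lt_const hη
        filter_upwards [h6, eventually_ge_atTop 1] with T h1 h2
        have hs1 : (1:ℝ) ≤ Real.sqrt T := Real.one_le_sqrt.2 (by exact_mod_cast h2)
        have h3 : Ψ (K T * c0) ≤ Real.sqrt T * Ψ (K T * c0) :=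
          le_mul_of_one_le_left (hΨ01 _).1 hs1
        linarith
      apply aux_tendsto_measure_zero_mono P _ _ ?_ (hθμ j c0 hc0)
      filter_upwards [hsmall] with T hT
      intro ω hω
      simp only [Set.mem_setOf_eq] at hω ⊢
      by_contra hcon
      push_neg at hcon
      have hhalf : θ j * μ j = 2 * c0 := by rw [hc0def]; ring
      have h1 : c0 ≤ thetahat T ω j * muhat T ω j := by
        have := (abs_le.1 hcon).2
        have h2 := (abs_le.1 hcon).1
        linarith
      have h2 : K T * c0 ≤ K T * (thetahat T ω j * muhat T ω j) :=
        mul_le_mul_of_nonneg_left h1 (hKpos T).le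
      have h3 : Ψ (K T * thetahat T ω j * muhat T ω j) ≤ Ψ (K T * c0) := by
        apply hΨanti
        rw [mul_assoc]
        exact h2
      have h4 : |Psihat Ψ K muhat thetahat T ω j - 0| =
          Ψ (K T * thetahat T ω j * muhat T ω j) := by
        rw [sub_zero]
        exact abs_of_nonneg (hΨ01 _).1
      rw [h4] at hω
      linarith
  have hcomp := aux_tendstoInProb_comp (ι := (Fin p ⊕ Fin p) ⊕ Fin p × Fin p) P
    (fun i => match i with
      | Sum.inl (Sum.inl j) => fun T ω => Psihat Ψ K muhat thetahat T ω j
      | Sum.inl (Sum.inr j) => fun T ω => thetahat T ω j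
      | Sum.inr ij => fun T ω => Vhat T ω ij.1 ij.2)
    (fun i => match i with
      | Sum.inl (Sum.inl j) => if μ j = 0 then Ψ 0 else 0
      | Sum.inl (Sum.inr j) => θ j
      | Sum.inr ij => V ij.1 ij.2)
    (fun i => by
      rcases i with (j | j) | ⟨i, j⟩
      · exact hPsi j
      · exact hD4 j
      · exact hD3 i j)
    (fun y => Real.sqrt (∑ i, ∑ j,
      y (Sum.inl (Sum.inl i)) * y (Sum.inl (Sum.inr i)) * y (Sum.inr (i, j)) *
        y (Sum.inl (Sum.inr j)) * y (Sum.inl (Sum.inl j))))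
    (Continuous.continuousAt (Real.continuous_sqrt.comp
      (continuous_finset_sum _ fun i _ => continuous_finset_sum _ fun j _ =>
        ((((continuous_apply (Sum.inl (Sum.inl i))).mul
            (continuous_apply (Sum.inl (Sum.inr i)))).mul
          (continuous_apply (Sum.inr (i, j)))).mul
            (continuous_apply (Sum.inl (Sum.inr j)))).mul
          (continuous_apply (Sum.inl (Sum.inl j))))))
  have hval : Real.sqrt (∑ i, ∑ j,
      (if μ i = 0 then Ψ 0 else 0) * θ i * V i j * θ j *
        (if μ j = 0 then Ψ 0 else 0)) =
      Ψ 0 * Real.sqrt (∑ i, ∑ j,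
      (if μ i = 0 then (1:ℝ) else 0) * θ i * V i j * θ j *
        (if μ j = 0 then (1:ℝ) else 0)) := by
    have hsum : (∑ i, ∑ j, (if μ i = 0 then Ψ 0 else 0) * θ i * V i j * θ j *
        (if μ j = 0 then Ψ 0 else 0)) = Ψ 0 ^ 2 * ∑ i, ∑ j,
        (if μ i = 0 then (1:ℝ) else 0) * θ i * V i j * θ j *
          (if μ j = 0 then (1:ℝ) else 0) := by
      rw [Finset.mul_sum]
      refine Finset.sum_congr rfl fun i _ => ?_
      rw [Finset.mul_sum]
      refine Finset.sum_congr rfl fun j _ => ?_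
      by_cases hi : μ i = 0 <;> by_cases hj : μ j = 0 <;> simp [hi, hj] <;> ring
    rw [hsum, Real.sqrt_mul (sq_nonneg _), Real.sqrt_sq hΨ0.le]
  rw [← hval]
  exact hcomp


end
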